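/- With x_{0,l} = (r/α₂)·(Γ(1+(β+1)/α₂)/Γ(1+β₂/α₂))·Γ(l+β₂/α₂)/Γ(l+(α₂+β+1)/α₂) for l ≥ 1 and x_{0,0} = 0, where β = β₁ + β₂ and all parameters positive, the marginal sum satisfies ∑_{l=0}^∞ x_{0,l} = r/(β₁+1). -/

import Mathlib

open Real Filter Topology

/-- `Γ(n+A)/Γ(n+A+E) → 0` as `n → ∞`, for `A, E > 0`. -/
lemma gamma_ratio_tendsto_zero (A E : ℝ) (hA : 0 < A) (hE : 0 < E) :
    Tendsto (fun n : ℕ => Real.Gamma ((n : ℝ) + A) / Real.Gamma ((n : ℝ) + A + E))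
      atTop (𝓝 0) := by
  set E' : ℝ := min E (1 / 2) with hE'def
  have hE'pos : 0 < E' := lt_min hE (by norm_num)
  have hE'le : E' ≤ E := min_le_left _ _
  have hE'half : E' ≤ 1 / 2 := min_le_right _ _
  have hbound : Tendsto (fun n : ℕ => ((n : ℝ) + (A + E' - 1)) ^ (-E'))
      atTop (𝓝 0) := by
    exact (tendsto_rpow_neg_atTop hE'pos).comp
      (tendsto_atTop_add_const_right _ _ tendsto_natCast_atTop_atTop)
  refine tendsto_of_tendsto_of_tendsto_of_le_of_le' tendsto_const_nhds hbound ?_ ?_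
  · filter_upwards with n
    have h1 : 0 < Real.Gamma ((n : ℝ) + A) := Real.Gamma_pos_of_pos (by positivity)
    have h2 : 0 < Real.Gamma ((n : ℝ) + A + E) := Real.Gamma_pos_of_pos (by positivity)
    positivity
  · filter_upwards [eventually_ge_atTop 2] with n hn
    set X : ℝ := (n : ℝ) + A with hXdef
    have hX2 : (2 : ℝ) ≤ X := by
      have : (2 : ℝ) ≤ (n : ℝ) := by exact_mod_cast hn
      simp only [hXdef]; linarith
    have hq : (0 : ℝ) < X + E' - 1 := by linarith
    have hG' : 0 < Real.Gamma (X + E') := Real.Gamma_pos_of_pos (by linarith)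
    have hGE : 0 < Real.Gamma (X + E) := Real.Gamma_pos_of_pos (by linarith)
    have hGX : 0 < Real.Gamma X := Real.Gamma_pos_of_pos (by linarith)
    -- log-convexity bound
    have h1 : Real.Gamma X ≤
        Real.Gamma (X + E' - 1) ^ E' * Real.Gamma (X + E') ^ (1 - E') := by
      have := Real.Gamma_mul_add_mul_le_rpow_Gamma_mul_rpow_Gamma
        (s := X + E' - 1) (t := X + E') (a := E') (b := 1 - E')
        (by linarith) (by linarith) hE'pos (by linarith) (by ring)
      have harg : E' * (X + E' - 1) + (1 - E') * (X + E') = X := by ring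
      rwa [harg] at this
    have hGdiv : Real.Gamma (X + E' - 1) = Real.Gamma (X + E') / (X + E' - 1) := by
      have := Real.Gamma_add_one hq.ne'
      rw [show X + E' - 1 + 1 = X + E' by ring] at this
      field_simp [this]
      exact this.symm
    have key : Real.Gamma X ≤ Real.Gamma (X + E') * (X + E' - 1) ^ (-E') := by
      calc Real.Gamma X ≤ Real.Gamma (X + E' - 1) ^ E' * Real.Gamma (X + E') ^ (1 - E') := h1
        _ = Real.Gamma (X + E') ^ E' * Real.Gamma (X + E') ^ (1 - E')
              * ((X + E' - 1) ^ E')⁻¹ := by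
            rw [hGdiv, Real.div_rpow hG'.le hq.le]; ring
        _ = Real.Gamma (X + E') * (X + E' - 1) ^ (-E') := by
            rw [← Real.rpow_add hG', Real.rpow_neg hq.le]; norm_num
    have hmono : Real.Gamma (X + E') ≤ Real.Gamma (X + E) :=
      Real.Gamma_strictMonoOn_Ici.monotoneOn (by simp only [Set.mem_Ici]; linarith)
        (by simp only [Set.mem_Ici]; linarith) (by linarith)
    have step1 : Real.Gamma X / Real.Gamma (X + E) ≤ Real.Gamma X / Real.Gamma (X + E') := by
      gcongr
    have step2 : Real.Gamma X / Real.Gamma (X + E') ≤ (X + E' - 1) ^ (-E') := by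
      rw [div_le_iff₀ hG']
      calc Real.Gamma X ≤ Real.Gamma (X + E') * (X + E' - 1) ^ (-E') := key
        _ = (X + E' - 1) ^ (-E') * Real.Gamma (X + E') := by ring
    have : X + E' - 1 = (n : ℝ) + (A + E' - 1) := by simp only [hXdef]; ring
    calc Real.Gamma ((n : ℝ) + A) / Real.Gamma ((n : ℝ) + A + E)
        ≤ (X + E' - 1) ^ (-E') := le_trans step1 step2
      _ = ((n : ℝ) + (A + E' - 1)) ^ (-E') := by rw [this]

theorem marginal_x0 (α₂ β₁ β₂ r : ℝ) (hα₂ : 0 < α₂) (hβ₁ : 0 < β₁) (hβ₂ : 0 < β₂)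
    (hr : 0 < r) (x : ℕ → ℝ) (hx0 : x 0 = 0)
    (hx : ∀ l : ℕ, 1 ≤ l →
      x l = (r / α₂) *
        (Real.Gamma (1 + (β₁ + β₂ + 1) / α₂) / Real.Gamma (1 + β₂ / α₂)) *
        (Real.Gamma ((l : ℝ) + β₂ / α₂) /
          Real.Gamma ((l : ℝ) + (α₂ + (β₁ + β₂) + 1) / α₂))) :
    HasSum x (r / (β₁ + 1)) := by
  have hα₂' : α₂ ≠ 0 := hα₂.ne'
  set A : ℝ := β₂ / α₂ with hAdef
  set E : ℝ := (β₁ + 1) / α₂ with hEdef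
  have hApos : 0 < A := by positivity
  have hEpos : 0 < E := by positivity
  have hAE : (β₁ + β₂ + 1) / α₂ = A + E := by
    rw [hAdef, hEdef]; field_simp; ring
  have hAE2 : (α₂ + (β₁ + β₂) + 1) / α₂ = 1 + A + E := by
    rw [hAdef, hEdef]; field_simp; ring
  set C : ℝ := (r / α₂) * (Real.Gamma (1 + A + E) / Real.Gamma (1 + A)) with hCdef
  have hG1A : 0 < Real.Gamma (1 + A) := Real.Gamma_pos_of_pos (by positivity)
  have hG1AE : 0 < Real.Gamma (1 + A + E) := Real.Gamma_pos_of_pos (by positivity)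
  have hCpos : 0 < C := by rw [hCdef]; positivity
  -- the telescoping identity at real argument y
  have step : ∀ y : ℝ, 0 < y →
      Real.Gamma y / Real.Gamma (y + E) - Real.Gamma (y + 1) / Real.Gamma (y + 1 + E)
        = E * (Real.Gamma y / Real.Gamma (y + 1 + E)) := by
    intro y hy
    have h1 : Real.Gamma (y + 1) = y * Real.Gamma y := Real.Gamma_add_one hy.ne'
    have h2 : Real.Gamma (y + 1 + E) = (y + E) * Real.Gamma (y + E) := by
      rw [show y + 1 + E = (y + E) + 1 by ring, Real.Gamma_add_one (by positivity)]
    have hg1 : Real.Gamma (y + E) ≠ 0 := (Real.Gamma_pos_of_pos (by positivity)).ne'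
    have hyE : y + E ≠ 0 := by positivity
    rw [h1, h2]
    field_simp
    ring
  set u : ℕ → ℝ := fun n => Real.Gamma ((n : ℝ) + 1 + A) / Real.Gamma ((n : ℝ) + 1 + A + E)
    with hudef
  -- the rewritten form of x (n+1)
  have hx' : ∀ n : ℕ,
      x (n + 1) = C * (Real.Gamma ((n : ℝ) + 1 + A) / Real.Gamma ((n : ℝ) + 1 + A + 1 + E)) := by
    intro n
    have := hx (n + 1) (by omega)
    rw [this, hAE, hAE2]
    push_cast
    rw [hCdef]
    ring_nf
  have hxu : ∀ n : ℕ, x (n + 1) = (C / E) * (u n - u (n + 1)) := by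
    intro n
    have hy : (0 : ℝ) < (n : ℝ) + 1 + A := by positivity
    have hs := step ((n : ℝ) + 1 + A) hy
    have hu1 : u (n + 1) = Real.Gamma ((n : ℝ) + 1 + A + 1) / Real.Gamma ((n : ℝ) + 1 + A + 1 + E) := by
      rw [hudef]; push_cast; ring_nf
    rw [hx' n, hudef]
    push_cast
    rw [show ((n : ℝ) + 1 + 1 + A) = ((n : ℝ) + 1 + A + 1) by ring, hs]
    field_simp
  -- nonnegativity
  have hnn : ∀ n : ℕ, 0 ≤ x (n + 1) := by
    intro n
    rw [hx' n]
    have h1 : 0 < Real.Gamma ((n : ℝ) + 1 + A) := Real.Gamma_pos_of_pos (by positivity)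
    have h2 : 0 < Real.Gamma ((n : ℝ) + 1 + A + 1 + E) := Real.Gamma_pos_of_pos (by positivity)
    positivity
  -- limit of u
  have hu0 : Tendsto u atTop (𝓝 0) := by
    have := (gamma_ratio_tendsto_zero A E hApos hEpos).comp (tendsto_add_atTop_nat 1)
    refine this.congr fun n => ?_
    simp only [Function.comp_apply, hudef]
    push_cast
    ring_nf
  -- value of the sum of the shifted sequence
  have hval : (C / E) * u 0 = r / (β₁ + 1) := by
    have h0 : u 0 = Real.Gamma (1 + A) / Real.Gamma (1 + A + E) := by
      rw [hudef]; norm_num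
    rw [h0, hCdef, hEdef]
    have hb1 : β₁ + 1 ≠ 0 := by positivity
    field_simp
  -- partial sums telescope
  have hsum : HasSum (fun n => x (n + 1)) (r / (β₁ + 1)) := by
    rw [hasSum_iff_tendsto_nat_of_nonneg hnn]
    have hps : ∀ n : ℕ, ∑ i ∈ Finset.range n, x (i + 1) = (C / E) * (u 0 - u n) := by
      intro n
      calc ∑ i ∈ Finset.range n, x (i + 1)
          = ∑ i ∈ Finset.range n, (C / E) * (u i - u (i + 1)) := by
            exact Finset.sum_congr rfl fun i _ => hxu i
        _ = (C / E) * ∑ i ∈ Finset.range n, (u i - u (i + 1)) := by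
            rw [Finset.mul_sum]
        _ = (C / E) * (u 0 - u n) := by rw [Finset.sum_range_sub' u n]
    have : Tendsto (fun n : ℕ => (C / E) * (u 0 - u n)) atTop (𝓝 ((C / E) * (u 0 - 0))) :=
      Tendsto.mul tendsto_const_nhds (tendsto_const_nhds.sub hu0)
    rw [sub_zero, hval] at this
    exact this.congr fun n => (hps n).symm
  have := (hasSum_nat_add_iff' 1).mp (show HasSum (fun n => x (n + 1))
    (r / (β₁ + 1) - ∑ i ∈ Finset.range 1, x i) by simpa [hx0] using hsum)
  exact this
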